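/- A distribution L on the extended reals ℝ ∪ {∞} is the privacy loss distribution of some pair of probability measures (P,Q) (i.e., the law of log(dP/dQ) under P) if and only if E_{Z∼L}[e^{-Z}] ≤ 1. -/

import Mathlib

open MeasureTheory Filter Set
open scoped ENNReal NNReal

noncomputable def privacyLoss {Ω : Type*} [MeasurableSpace Ω] (P Q : Measure Ω) (ω : Ω) : EReal :=
  let p := P.rnDeriv (P + Q) ω
  let q := Q.rnDeriv (P + Q) ω
  if q = 0 then ⊤ else if p = 0 then ⊥ else ((Real.log (p.toReal / q.toReal) : ℝ) : EReal)

/-- The privacy loss distribution of `P` versus `Q`: the law of `log (dP/dQ)` under `P`. -/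
noncomputable def pld {Ω : Type*} [MeasurableSpace Ω] (P Q : Measure Ω) : Measure EReal :=
  P.map (privacyLoss P Q)

/-- `e^{-z}` for `z : EReal`, valued in `ℝ≥0∞`. -/
noncomputable def expNegE (z : EReal) : ℝ≥0∞ :=
  if z = ⊤ then 0 else if z = ⊥ then ⊤ else ENNReal.ofReal (Real.exp (-z.toReal))

/-- A probability distribution `L` on `ℝ ∪ {∞}` (no mass at `-∞`) is the privacy loss
distribution of some pair of probability measures `(P, Q)` iff `E_{Z∼L}[e^{-Z}] ≤ 1`. -/
lemma measurable_expNegE : Measurable expNegE := by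
  unfold expNegE
  refine Measurable.ite (measurableSet_eq) measurable_const ?_
  refine Measurable.ite (measurableSet_eq) measurable_const ?_
  exact ENNReal.measurable_ofReal.comp (Real.measurable_exp.comp
    (measurable_ereal_toReal.neg))

lemma measurable_privacyLoss {Ω : Type*} [MeasurableSpace Ω] (P Q : Measure Ω) :
    Measurable (privacyLoss P Q) := by
  unfold privacyLoss
  have hp := Measure.measurable_rnDeriv P (P + Q)
  have hq := Measure.measurable_rnDeriv Q (P + Q)
  refine Measurable.ite (hq (measurableSet_singleton 0)) measurable_const ?_
  refine Measurable.ite (hp (measurableSet_singleton 0)) measurable_const ?_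
  exact Measurable.coe_real_ereal ((hp.ennreal_toReal.div hq.ennreal_toReal).log)

lemma forward_le {Ω : Type*} [MeasurableSpace Ω] (P Q : Measure Ω)
    [IsProbabilityMeasure P] [IsProbabilityMeasure Q] :
    ∫⁻ z, expNegE z ∂(pld P Q) ≤ 1 := by
  set ν := P + Q with hν
  have hPν : P ≪ ν := Measure.absolutelyContinuous_of_le (Measure.le_add_right le_rfl)
  have hQν : Q ≪ ν := Measure.absolutelyContinuous_of_le (Measure.le_add_left le_rfl)
  set p := P.rnDeriv ν with hp
  set q := Q.rnDeriv ν with hqdef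
  rw [pld, lintegral_map measurable_expNegE (measurable_privacyLoss P Q)]
  have h1 : ∀ᵐ ω ∂P, 0 < p ω := Measure.rnDeriv_pos hPν
  have h2 : ∀ᵐ ω ∂P, p ω < ∞ := (Measure.rnDeriv_lt_top P ν).filter_mono hPν.ae_le
  have h3 : ∀ᵐ ω ∂P, q ω < ∞ := (Measure.rnDeriv_lt_top Q ν).filter_mono hPν.ae_le
  have hae : ∀ᵐ ω ∂P, expNegE (privacyLoss P Q ω) = q ω / p ω := by
    filter_upwards [h1, h2, h3] with ω h1 h2 h3
    simp only [privacyLoss, ← hν, ← hp, ← hqdef]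
    by_cases hq0 : q ω = 0
    · simp [hq0, expNegE, ENNReal.zero_div]
    · have hp0 : p ω ≠ 0 := h1.ne'
      simp only [hq0, if_false, hp0, expNegE]
      have hpt : 0 < (p ω).toReal := ENNReal.toReal_pos hp0 h2.ne
      have hqt : 0 < (q ω).toReal := ENNReal.toReal_pos hq0 h3.ne
      rw [if_neg (EReal.coe_ne_top _), if_neg (EReal.coe_ne_bot _), EReal.toReal_coe,
        ← Real.log_inv, Real.exp_log (by positivity), inv_div,
        ENNReal.ofReal_div_of_pos hpt, ENNReal.ofReal_toReal h3.ne,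
        ENNReal.ofReal_toReal h2.ne]
  rw [lintegral_congr_ae hae]
  have hPw : P = ν.withDensity p := (Measure.withDensity_rnDeriv_eq P ν hPν).symm
  calc ∫⁻ ω, q ω / p ω ∂P = ∫⁻ ω, (p * fun ω => q ω / p ω) ω ∂ν := by
        rw [hPw]; exact lintegral_withDensity_eq_lintegral_mul _ (Measure.measurable_rnDeriv _ _)
          ((Measure.measurable_rnDeriv _ _).div (Measure.measurable_rnDeriv _ _))
    _ ≤ ∫⁻ ω, q ω ∂ν := lintegral_mono fun ω => ENNReal.mul_div_le
    _ = Q univ := Measure.lintegral_rnDeriv hQν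
    _ = 1 := measure_univ

lemma backward (L : Measure EReal) [IsProbabilityMeasure L] (hbot : L {⊥} = 0)
    (hint : ∫⁻ z, expNegE z ∂L ≤ 1) :
    ∃ Q : Measure EReal, IsProbabilityMeasure Q ∧ L = pld L Q := by
  classical
  set f : EReal → ℝ≥0∞ := fun z => if z = ⊥ then 0 else expNegE z with hf
  have hfm : Measurable f :=
    Measurable.ite measurableSet_eq measurable_const measurable_expNegE
  have hfL : f =ᵐ[L] expNegE := by
    have : ∀ᵐ z ∂L, z ≠ ⊥ := by
      rw [ae_iff]; simpa using hbot
    filter_upwards [this] with z hz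
    simp [hf, hz]
  have hIf : ∫⁻ z, f z ∂L = ∫⁻ z, expNegE z ∂L := lintegral_congr_ae hfL
  set I := ∫⁻ z, expNegE z ∂L with hI
  set c := 1 - I with hc
  set D : Measure EReal := c • Measure.dirac (⊥ : EReal) with hD
  set Q : Measure EReal := L.withDensity f + D with hQ
  have hfin : IsFiniteMeasure (L.withDensity f) := by
    refine isFiniteMeasure_withDensity ?_
    rw [hIf]; exact (lt_of_le_of_lt hint ENNReal.one_lt_top).ne
  have hDfin : IsFiniteMeasure D := by
    constructor
    rw [hD, Measure.smul_apply, smul_eq_mul]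
    calc c * Measure.dirac (⊥ : EReal) univ ≤ 1 * 1 := by
          gcongr
          · exact tsub_le_self.trans le_rfl
          · simp
      _ < ∞ := by simp
  have hQprob : IsProbabilityMeasure Q := by
    constructor
    rw [hQ, Measure.add_apply, withDensity_apply _ MeasurableSet.univ,
      Measure.restrict_univ, hIf, hD, Measure.smul_apply, smul_eq_mul]
    simp only [measure_univ, mul_one]
    rw [add_comm, tsub_add_cancel_of_le hint]
  haveI := hfin; haveI := hDfin; haveI := hQprob
  refine ⟨Q, hQprob, ?_⟩
  set ν : Measure EReal := L + Q with hν
  haveI : IsFiniteMeasure ν := by rw [hν]; infer_instance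
  haveI : SigmaFinite ν := inferInstance
  haveI : SigmaFinite L := inferInstance
  have hLν : L ≪ ν := Measure.absolutelyContinuous_of_le (Measure.le_add_right le_rfl)
  have hQν : Q ≪ ν := Measure.absolutelyContinuous_of_le (Measure.le_add_left le_rfl)
  have hDν : D ≪ ν := Measure.absolutelyContinuous_of_le
    ((Measure.le_add_left le_rfl).trans (Measure.le_add_left le_rfl))
  set p := L.rnDeriv ν with hp
  set q := Q.rnDeriv ν with hqdef
  have hne : ∀ᵐ z ∂L, z ≠ (⊥ : EReal) := by rw [ae_iff]; simpa using hbot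
  have hqd : q =ᵐ[L] ((L.withDensity f).rnDeriv ν + D.rnDeriv ν) :=
    (Measure.rnDeriv_add _ _ _).filter_mono hLν.ae_le
  have hwd : (L.withDensity f).rnDeriv ν =ᵐ[L] fun z => f z * p z := by
    refine (Measure.rnDeriv_withDensity_left hfm.aemeasurable
      (ae_of_all _ fun z => ?_)).filter_mono hLν.ae_le
    by_cases hz : z = ⊥
    · simp [hf, hz]
    · simp only [hf, hz, if_false, expNegE]
      split_ifs <;> simp
  have hDrn : ∀ᵐ z ∂L, D.rnDeriv ν z = 0 := by
    have hset : ∫⁻ z in {(⊥ : EReal)}ᶜ, D.rnDeriv ν z ∂ν = 0 := by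
      rw [Measure.setLIntegral_rnDeriv hDν]
      rw [hD, Measure.smul_apply, Measure.dirac_apply' _ (measurableSet_singleton _).compl]
      simp
    have h0 : D.rnDeriv ν =ᵐ[ν.restrict {(⊥ : EReal)}ᶜ] 0 :=
      (lintegral_eq_zero_iff (Measure.measurable_rnDeriv D ν)).mp hset
    have h1 := (ae_restrict_iff' (measurableSet_singleton (⊥ : EReal)).compl).mp h0
    filter_upwards [h1.filter_mono hLν.ae_le, hne] with z h1 hz
    exact h1 hz
  have hpos : ∀ᵐ z ∂L, 0 < p z := Measure.rnDeriv_pos hLν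
  have hlt : ∀ᵐ z ∂L, p z < ∞ := (Measure.rnDeriv_lt_top L ν).filter_mono hLν.ae_le
  have hφ : privacyLoss L Q =ᵐ[L] id := by
    filter_upwards [hqd, hwd, hDrn, hne, hpos, hlt] with z hq hw hd hz h1 h2
    have hqz : q z = f z * p z := by
      rw [hq, Pi.add_apply, hw, hd, add_zero]
    simp only [privacyLoss, ← hν, ← hp, ← hqdef, id_eq]
    by_cases hzt : z = ⊤
    · subst hzt
      have h0 : q ⊤ = 0 := by simp [hqz, hf, expNegE]
      simp [h0]
    · have hfz : f z = ENNReal.ofReal (Real.exp (-z.toReal)) := by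
        simp [hf, hz, hzt, expNegE]
      have hfz0 : f z ≠ 0 := by
        rw [hfz]; simp [Real.exp_pos, ENNReal.ofReal_pos.mpr]
      have hq0 : q z ≠ 0 := by rw [hqz]; exact mul_ne_zero hfz0 h1.ne'
      have hpt : 0 < (p z).toReal := ENNReal.toReal_pos h1.ne' h2.ne
      rw [if_neg hq0, if_neg h1.ne']
      have hqt : (q z).toReal = Real.exp (-z.toReal) * (p z).toReal := by
        rw [hqz, hfz, ENNReal.toReal_mul, ENNReal.toReal_ofReal (Real.exp_pos _).le]
      rw [hqt]
      have : (p z).toReal / (Real.exp (-z.toReal) * (p z).toReal) = Real.exp z.toReal := by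
        rw [mul_comm, ← div_div, div_self hpt.ne', one_div, ← Real.exp_neg, neg_neg]
      rw [this, Real.log_exp, EReal.coe_toReal hzt hz]
  rw [pld, Measure.map_congr hφ, Measure.map_id]

theorem stmt0 (L : Measure EReal) [IsProbabilityMeasure L] (hbot : L {⊥} = 0) :
    (∃ (Ω : Type) (_ : MeasurableSpace Ω) (P Q : Measure Ω),
        IsProbabilityMeasure P ∧ IsProbabilityMeasure Q ∧ L = pld P Q) ↔
      ∫⁻ z, expNegE z ∂L ≤ 1 := by
  constructor
  · rintro ⟨Ω, mΩ, P, Q, hP, hQ, rfl⟩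
    exact forward_le P Q
  · intro h
    obtain ⟨Q, hQ, hLQ⟩ := backward L hbot h
    exact ⟨EReal, inferInstance, L, Q, inferInstance, hQ, hLQ⟩
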